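/- Let K ∈ ℝ^{n×n} be symmetric positive definite, y ∈ ℝ^n, i ∈ {1,...,n}, and define coefficient vectors c_S = K^{-1}y and c_{S_i} = (K_{S_i})^† y_i where y_i is y with i-th entry zeroed and K_{S_i} is K with row/column i zeroed. Then the RKHS norm of the difference of the corresponding minimum-norm interpolants satisfies ‖f_S^† − f_{S_i}^†‖_H = ‖K^{1/2}(c_S − c_{S_i})‖ ≤ ‖K^{1/2}‖_op · ‖K^{-1}‖_op · cond(K) · ‖y‖. -/

import Mathlib

open Matrix

/-- `B` satisfies the four Moore–Penrose conditions for `A`. -/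
def IsMoorePenrose {d n : ℕ} (A : Matrix (Fin d) (Fin n) ℝ)
    (B : Matrix (Fin n) (Fin d) ℝ) : Prop :=
  A * B * A = A ∧ B * A * B = B ∧ (A * B)ᵀ = A * B ∧ (B * A)ᵀ = B * A

/-- Operator norm of a matrix with respect to Euclidean norms. -/
noncomputable def opNorm {m n : ℕ} (A : Matrix (Fin m) (Fin n) ℝ) : ℝ :=
  ‖LinearMap.toContinuousLinearMap (Matrix.toEuclideanLin A)‖

/-- Euclidean norm of a vector. -/
noncomputable def _root_.enorm {n : ℕ} (v : Fin n → ℝ) : ℝ :=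
  Real.sqrt (∑ i, v i ^ 2)

noncomputable def Matrix.PosSemidef.sqrt {n : ℕ} {A : Matrix (Fin n) (Fin n) ℝ}
    (hA : A.PosSemidef) : Matrix (Fin n) (Fin n) ℝ :=
  (hA.1.eigenvectorUnitary : Matrix (Fin n) (Fin n) ℝ) *
    diagonal ((↑) ∘ (√·) ∘ hA.1.eigenvalues) *
    (star (hA.1.eigenvectorUnitary : Matrix (Fin n) (Fin n) ℝ))
lemma sqrt_mul_self' {n : ℕ} {A : Matrix (Fin n) (Fin n) ℝ} (hA : A.PosSemidef) :
    hA.sqrt * hA.sqrt = A := by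
  unfold Matrix.PosSemidef.sqrt
  set U : Matrix (Fin n) (Fin n) ℝ := (hA.1.eigenvectorUnitary : Matrix (Fin n) (Fin n) ℝ)
  have hU : star U * U = 1 := Unitary.coe_star_mul_self _
  set D : Matrix (Fin n) (Fin n) ℝ :=
    diagonal ((fun x : ℝ => x) ∘ (fun x : ℝ => √x) ∘ hA.1.eigenvalues) with hDdef
  have hD : D * D
      = diagonal (RCLike.ofReal ∘ hA.1.eigenvalues) := by
    rw [hDdef, diagonal_mul_diagonal]; congr 1; funext j
    simp [Real.mul_self_sqrt (hA.eigenvalues_nonneg j)]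
  calc U * D * star U * (U * D * star U)
      = U * (D * (star U * U) * D) * star U := by simp only [Matrix.mul_assoc]
    _ = U * diagonal (RCLike.ofReal ∘ hA.1.eigenvalues) * star U := by
        rw [hU, Matrix.mul_one, hD]
    _ = A := by
        conv_rhs => rw [hA.1.spectral_theorem]
        simp [U, Unitary.conjStarAlgAut_apply]
lemma sqrt_transpose' {n : ℕ} {A : Matrix (Fin n) (Fin n) ℝ} (hA : A.PosSemidef) :
    hA.sqrt ᵀ = hA.sqrt := by
  unfold Matrix.PosSemidef.sqrt
  rw [← conjTranspose_eq_transpose_of_trivial, conjTranspose_mul, conjTranspose_mul,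
    diagonal_conjTranspose]
  simp [Matrix.mul_assoc, Matrix.star_eq_conjTranspose]
namespace KernelAux

variable {n : ℕ}

lemma enorm_eq_norm (v : Fin n → ℝ) :
    _root_.enorm v = ‖(WithLp.equiv 2 (Fin n → ℝ)).symm v‖ := by
  rw [EuclideanSpace.norm_eq]
  unfold _root_.enorm
  congr 1
  refine Finset.sum_congr rfl fun j _ => ?_
  simp [Real.norm_eq_abs, sq_abs]

lemma enorm_nonneg (v : Fin n → ℝ) : 0 ≤ _root_.enorm v := Real.sqrt_nonneg _

lemma opNorm_nonneg {m : ℕ} (A : Matrix (Fin m) (Fin n) ℝ) : 0 ≤ opNorm A :=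
  norm_nonneg _

lemma enorm_smul (c : ℝ) (v : Fin n → ℝ) : _root_.enorm (c • v) = |c| * _root_.enorm v := by
  rw [enorm_eq_norm, enorm_eq_norm]
  have h : (WithLp.equiv 2 (Fin n → ℝ)).symm (c • v)
      = c • (WithLp.equiv 2 (Fin n → ℝ)).symm v := rfl
  rw [h, norm_smul, Real.norm_eq_abs]

lemma enorm_mulVec_le {m : ℕ} (A : Matrix (Fin m) (Fin n) ℝ) (v : Fin n → ℝ) :
    _root_.enorm (A *ᵥ v) ≤ opNorm A * _root_.enorm v := by
  rw [enorm_eq_norm, enorm_eq_norm]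
  have h := (LinearMap.toContinuousLinearMap (Matrix.toEuclideanLin A)).le_opNorm
    ((WithLp.equiv 2 (Fin n → ℝ)).symm v)
  simpa [opNorm] using h

lemma abs_dotProduct_le (u y : Fin n → ℝ) : |u ⬝ᵥ y| ≤ _root_.enorm u * _root_.enorm y := by
  rw [enorm_eq_norm, enorm_eq_norm]
  have h := abs_real_inner_le_norm ((WithLp.equiv 2 (Fin n → ℝ)).symm u)
    ((WithLp.equiv 2 (Fin n → ℝ)).symm y)
  simpa [PiLp.inner_apply, RCLike.inner_apply, conj_trivial, dotProduct, mul_comm] using h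

lemma abs_apply_le_enorm (v : Fin n → ℝ) (j : Fin n) : |v j| ≤ _root_.enorm v := by
  unfold _root_.enorm
  rw [← Real.sqrt_sq_eq_abs]
  exact Real.sqrt_le_sqrt (Finset.single_le_sum (f := fun i => v i ^ 2)
    (fun i _ => sq_nonneg _) (Finset.mem_univ j))

lemma enorm_sq (v : Fin n → ℝ) : _root_.enorm v ^ 2 = v ⬝ᵥ v := by
  unfold _root_.enorm
  rw [Real.sq_sqrt (by positivity)]
  simp [dotProduct, sq]

lemma enorm_single (i : Fin n) : _root_.enorm (Pi.single i 1 : Fin n → ℝ) = 1 := by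
  unfold _root_.enorm
  have h : ∀ j, (Pi.single i 1 : Fin n → ℝ) j ^ 2 = if j = i then 1 else 0 := by
    intro j
    by_cases hj : j = i
    · subst hj; simp
    · simp [hj]
  rw [Finset.sum_congr rfl fun j _ => h j, Finset.sum_ite_eq' Finset.univ i fun _ => (1:ℝ)]
  simp

lemma mul_vecMulVec (M : Matrix (Fin n) (Fin n) ℝ) (a b : Fin n → ℝ) :
    M * vecMulVec a b = vecMulVec (M *ᵥ a) b := by
  ext j k
  simp only [mul_apply, vecMulVec_apply, mulVec, dotProduct, Finset.sum_mul]
  exact Finset.sum_congr rfl fun l _ => by ring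

lemma vecMulVec_mul (a b : Fin n → ℝ) (M : Matrix (Fin n) (Fin n) ℝ) :
    vecMulVec a b * M = vecMulVec a (b ᵥ* M) := by
  ext j k
  simp only [mul_apply, vecMulVec_apply, vecMul, dotProduct, Finset.mul_sum]
  exact Finset.sum_congr rfl fun l _ => by ring

lemma vecMulVec_mulVec (a b y : Fin n → ℝ) :
    vecMulVec a b *ᵥ y = (b ⬝ᵥ y) • a := by
  funext j
  simp only [mulVec, vecMulVec_apply, dotProduct, Pi.smul_apply, smul_eq_mul]
  rw [Finset.sum_mul]
  exact Finset.sum_congr rfl fun l _ => by ring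

lemma vecMul_vecMulVec (x a b : Fin n → ℝ) :
    x ᵥ* vecMulVec a b = (x ⬝ᵥ a) • b := by
  funext k
  simp only [vecMul, vecMulVec_apply, dotProduct, Pi.smul_apply, smul_eq_mul]
  rw [Finset.sum_mul]
  exact Finset.sum_congr rfl fun l _ => by ring

lemma vecMulVec_zero_left (b : Fin n → ℝ) : vecMulVec (0 : Fin n → ℝ) b = 0 := by
  ext j k; simp [vecMulVec_apply]

lemma vecMulVec_zero_right (a : Fin n → ℝ) : vecMulVec a (0 : Fin n → ℝ) = 0 := by
  ext j k; simp [vecMulVec_apply]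

/-- Uniqueness of the Moore–Penrose pseudoinverse. -/
lemma mp_unique {d m : ℕ} {A : Matrix (Fin d) (Fin m) ℝ}
    {B C : Matrix (Fin m) (Fin d) ℝ}
    (hB : IsMoorePenrose A B) (hC : IsMoorePenrose A C) : B = C := by
  obtain ⟨hB1, hB2, hB3, hB4⟩ := hB
  obtain ⟨hC1, hC2, hC3, hC4⟩ := hC
  have hAB : A * B = A * C := by
    calc A * B = (A * B)ᵀ := hB3.symm
      _ = Bᵀ * Aᵀ := transpose_mul _ _
      _ = Bᵀ * (A * C * A)ᵀ := by rw [hC1]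
      _ = Bᵀ * (Aᵀ * (A * C)ᵀ) := by rw [transpose_mul (A * C) A]
      _ = (Bᵀ * Aᵀ) * (A * C)ᵀ := by rw [Matrix.mul_assoc]
      _ = (A * B)ᵀ * (A * C)ᵀ := by rw [transpose_mul A B]
      _ = (A * B) * (A * C) := by rw [hB3, hC3]
      _ = ((A * B) * A) * C := by simp only [Matrix.mul_assoc]
      _ = A * C := by rw [hB1]
  have hBA : B * A = C * A := by
    calc B * A = (B * A)ᵀ := hB4.symm
      _ = Aᵀ * Bᵀ := transpose_mul _ _
      _ = (A * C * A)ᵀ * Bᵀ := by rw [hC1]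
      _ = (Aᵀ * (A * C)ᵀ) * Bᵀ := by rw [transpose_mul (A * C) A]
      _ = (Aᵀ * (Cᵀ * Aᵀ)) * Bᵀ := by rw [transpose_mul A C]
      _ = (Aᵀ * Cᵀ) * (Aᵀ * Bᵀ) := by simp only [Matrix.mul_assoc]
      _ = (C * A)ᵀ * (B * A)ᵀ := by rw [transpose_mul C A, transpose_mul B A]
      _ = (C * A) * (B * A) := by rw [hC4, hB4]
      _ = C * ((A * B) * A) := by simp only [Matrix.mul_assoc]
      _ = C * A := by rw [hB1]
  calc B = B * A * B := hB2.symm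
    _ = (C * A) * B := by rw [hBA]
    _ = C * (A * B) := Matrix.mul_assoc _ _ _
    _ = C * (A * C) := by rw [hAB]
    _ = C * A * C := (Matrix.mul_assoc _ _ _).symm
    _ = C := hC2

end KernelAux

open KernelAux

/-- Stability estimate for minimum norm kernel interpolants: with `c_S = K⁻¹y` and
`c_{S_i} = (K_{S_i})^† y_i`,
`‖f_S^† − f_{S_i}^†‖_H = ‖K^{1/2}(c_S − c_{S_i})‖ ≤ ‖K^{1/2}‖_op‖K⁻¹‖_op·cond(K)·‖y‖`
where `cond(K) = ‖K‖_op‖K⁻¹‖_op`. -/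
theorem kernel_min_norm_stability {n : ℕ} (K : Matrix (Fin n) (Fin n) ℝ)
    (hK : K.PosDef) (i : Fin n) (y : Fin n → ℝ)
    (P : Matrix (Fin n) (Fin n) ℝ)
    (hP : IsMoorePenrose
      (Matrix.of fun j k => if j = i ∨ k = i then (0 : ℝ) else K j k) P) :
    let cS : Fin n → ℝ := K⁻¹.mulVec y
    let cSi : Fin n → ℝ := P.mulVec (Function.update y i 0)
    _root_.enorm ((hK.posSemidef.sqrt).mulVec (cS - cSi))
      ≤ opNorm hK.posSemidef.sqrt * opNorm K⁻¹ * (opNorm K * opNorm K⁻¹) * _root_.enorm y := by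
  classical
  set A : Matrix (Fin n) (Fin n) ℝ :=
    Matrix.of fun j k => if j = i ∨ k = i then (0 : ℝ) else K j k with hAdef
  intro cS cSi
  have hdet : IsUnit K.det := (Matrix.isUnit_iff_isUnit_det _).mp hK.isUnit
  have hKK : K * K⁻¹ = 1 := mul_nonsing_inv _ hdet
  have hK'K : K⁻¹ * K = 1 := nonsing_inv_mul _ hdet
  have hKsymm : Kᵀ = K := by
    have h := hK.isHermitian.eq
    rwa [conjTranspose_eq_transpose_of_trivial] at h
  have hKinvPD : (K⁻¹).PosDef := hK.inv
  have hKinvsymm : (K⁻¹)ᵀ = K⁻¹ := by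
    have h := hKinvPD.isHermitian.eq
    rwa [conjTranspose_eq_transpose_of_trivial] at h
  set e1 : Fin n → ℝ := Pi.single i 1 with he1
  set u : Fin n → ℝ := K⁻¹ *ᵥ e1 with hu
  set κ : ℝ := K⁻¹ i i with hκdef
  have hui : u ⬝ᵥ e1 = κ := by
    simp [hu, he1, hκdef]
  have he1u : e1 ⬝ᵥ u = κ := by
    simp [hu, he1, hκdef]
  have hee : e1 ⬝ᵥ e1 = 1 := by
    simp [he1]
  have hκpos : 0 < κ := by
    have hne : e1 ≠ 0 := by
      intro h
      have := congrFun h i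
      simp [he1] at this
    have h := hKinvPD.dotProduct_mulVec_pos hne
    rwa [star_trivial, ← hu, he1u] at h
  set Svv : Matrix (Fin n) (Fin n) ℝ := vecMulVec e1 e1 with hS
  set E : Matrix (Fin n) (Fin n) ℝ := 1 - Svv with hE
  set Q : Matrix (Fin n) (Fin n) ℝ := K⁻¹ - κ⁻¹ • vecMulVec u u with hQ
  have hKu : K *ᵥ u = e1 := by rw [hu, mulVec_mulVec, hKK, one_mulVec]
  have huK : u ᵥ* K = e1 := by rw [← hKsymm, vecMul_transpose, hKu]
  have hQe : Q *ᵥ e1 = 0 := by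
    rw [hQ, sub_mulVec, smul_mulVec, KernelAux.vecMulVec_mulVec, hui, ← hu, smul_smul,
      inv_mul_cancel₀ hκpos.ne', one_smul, sub_self]
  have hutr : (vecMulVec u u)ᵀ = vecMulVec u u := by
    ext j k; simp [vecMulVec_apply, transpose_apply, mul_comm]
  have hQsymm : Qᵀ = Q := by
    rw [hQ, transpose_sub, hKinvsymm, transpose_smul, hutr]
  have heQ : e1 ᵥ* Q = 0 := by
    rw [← hQsymm, vecMul_transpose, hQe]
  have hSQ : Svv * Q = 0 := by rw [hS, KernelAux.vecMulVec_mul, heQ, vecMulVec_zero_right]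
  have hQS : Q * Svv = 0 := by rw [hS, KernelAux.mul_vecMulVec, hQe, vecMulVec_zero_left]
  have hEQ : E * Q = Q := by rw [hE, sub_mul, one_mul, hSQ, sub_zero]
  have hQE : Q * E = Q := by rw [hE, mul_sub, mul_one, hQS, sub_zero]
  have hSe : Svv *ᵥ e1 = e1 := by rw [hS, KernelAux.vecMulVec_mulVec, hee, one_smul]
  have hEe : E *ᵥ e1 = 0 := by rw [hE, sub_mulVec, one_mulVec, hSe, sub_self]
  have hSS : Svv * Svv = Svv := by
    rw [hS, KernelAux.mul_vecMulVec, KernelAux.vecMulVec_mulVec, hee, one_smul]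
  have hEE : E * E = E := by
    rw [hE, sub_mul, one_mul, mul_sub, mul_one, hSS, sub_self, sub_zero]
  have hStr : Svvᵀ = Svv := by
    rw [hS]; ext j k; simp [vecMulVec_apply, transpose_apply, mul_comm]
  have hEsymm : Eᵀ = E := by rw [hE, transpose_sub, transpose_one, hStr]
  have he1K : e1 ᵥ* K = K i := by
    rw [he1, single_vecMul]; funext k; simp
  have hKe : K *ᵥ e1 = fun j => K j i := by
    rw [he1, mulVec_single]; funext j; simp
  have hA : A = E * K * E := by
    have h1 : E * K = K - Svv * K := by rw [hE, sub_mul, one_mul]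
    have h2 : E * K * E = (K - Svv * K) - ((K - Svv * K) * Svv) := by
      rw [h1, hE, mul_sub, mul_one]
    have h3 : (K - Svv * K) * Svv = K * Svv - Svv * K * Svv := by rw [sub_mul]
    have hSKe : Svv * K = vecMulVec e1 (K i) := by rw [hS, KernelAux.vecMulVec_mul, he1K]
    have hKSe : K * Svv = vecMulVec (fun j => K j i) e1 := by
      rw [hS, KernelAux.mul_vecMulVec, hKe]
    have hSKS : Svv * K * Svv = vecMulVec e1 ((K i i) • e1) := by
      rw [hSKe, hS, KernelAux.vecMulVec_mul, KernelAux.vecMul_vecMulVec]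
      congr 1
      rw [he1, dotProduct_single, mul_one]
    rw [h2, h3, hSKS, hSKe, hKSe, hAdef]
    ext j k
    simp only [of_apply, Matrix.sub_apply, vecMulVec_apply, Pi.smul_apply, smul_eq_mul, he1]
    by_cases hj : j = i <;> by_cases hk : k = i <;>
      simp [hj, hk, Pi.single_apply] <;> ring
  have hKQ : K * Q = 1 - κ⁻¹ • vecMulVec e1 u := by
    rw [hQ, mul_sub, hKK, Matrix.mul_smul, KernelAux.mul_vecMulVec, hKu]
  have hQK : Q * K = 1 - κ⁻¹ • vecMulVec u e1 := by
    rw [hQ, sub_mul, hK'K, Matrix.smul_mul, KernelAux.vecMulVec_mul, huK]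
  have hAQ : A * Q = E := by
    calc A * Q = E * K * E * Q := by rw [hA]
      _ = E * K * (E * Q) := by simp only [Matrix.mul_assoc]
      _ = E * (K * Q) := by rw [hEQ, Matrix.mul_assoc]
      _ = E * 1 - κ⁻¹ • (E * vecMulVec e1 u) := by
          rw [hKQ, mul_sub, Matrix.mul_smul]
      _ = E := by
          rw [mul_one, KernelAux.mul_vecMulVec, hEe, vecMulVec_zero_left, smul_zero, sub_zero]
  have hQA : Q * A = E := by
    calc Q * A = Q * (E * K * E) := by rw [hA]
      _ = ((Q * E) * K) * E := by simp only [Matrix.mul_assoc]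
      _ = Q * K * E := by rw [hQE]
      _ = (1 - κ⁻¹ • vecMulVec u e1) * E := by rw [hQK]
      _ = E - κ⁻¹ • vecMulVec u (e1 ᵥ* E) := by
          rw [sub_mul, one_mul, Matrix.smul_mul, KernelAux.vecMulVec_mul]
      _ = E := by
          have he1E : e1 ᵥ* E = 0 := by rw [← hEsymm, vecMul_transpose, hEe]
          rw [he1E, vecMulVec_zero_right, smul_zero, sub_zero]
  have hQmp : IsMoorePenrose A Q := by
    refine ⟨?_, ?_, ?_, ?_⟩
    · rw [hAQ]
      calc E * A = E * (E * K * E) := by rw [hA]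
        _ = ((E * E) * K) * E := by simp only [Matrix.mul_assoc]
        _ = E * K * E := by rw [hEE]
        _ = A := hA.symm
    · rw [hQA, hEQ]
    · rw [hAQ, hEsymm]
    · rw [hQA, hEsymm]
  have hPQ : P = Q := mp_unique hP hQmp
  have hupdate : Function.update y i 0 = y - y i • e1 := by
    funext j
    by_cases hj : j = i
    · subst hj; simp [he1]
    · simp [Function.update_of_ne hj, he1, Pi.single_eq_of_ne hj]
  have hdiff : cS - cSi = (κ⁻¹ * (u ⬝ᵥ y)) • u := by
    show K⁻¹ *ᵥ y - P *ᵥ Function.update y i 0 = _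
    rw [hPQ, hupdate, mulVec_sub, mulVec_smul, hQe, smul_zero, sub_zero]
    rw [hQ, sub_mulVec, smul_mulVec, KernelAux.vecMulVec_mulVec, smul_smul, sub_sub_cancel]
  have ht : _root_.enorm u ≤ opNorm K⁻¹ := by
    have h := enorm_mulVec_le K⁻¹ e1
    rw [← hu, he1, enorm_single, mul_one] at h
    exact h
  have hKii : K i i ≤ opNorm K := by
    have h1 : (K *ᵥ e1) i = K i i := by rw [hKe]
    calc K i i ≤ |(K *ᵥ e1) i| := by rw [h1]; exact le_abs_self _
      _ ≤ _root_.enorm (K *ᵥ e1) := abs_apply_le_enorm _ _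
      _ ≤ opNorm K * _root_.enorm e1 := enorm_mulVec_le _ _
      _ = opNorm K := by rw [he1, enorm_single, mul_one]
  have hκKii : 1 ≤ κ * K i i := by
    set S2 : Matrix (Fin n) (Fin n) ℝ := hKinvPD.posSemidef.sqrt with hS2def
    have hS2S2 : S2 * S2 = K⁻¹ := sqrt_mul_self' _
    have hS2symm : S2ᵀ = S2 := by
      exact sqrt_transpose' _
    set w : Fin n → ℝ := K *ᵥ e1 with hw
    set a : Fin n → ℝ := S2 *ᵥ e1 with ha
    set b : Fin n → ℝ := S2 *ᵥ w with hb
    have haS2 : a ᵥ* S2 = u := by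
      rw [← hS2symm, vecMul_transpose, ha, mulVec_mulVec, hS2S2, hu]
    have hbS2 : b ᵥ* S2 = e1 := by
      rw [← hS2symm, vecMul_transpose, hb, mulVec_mulVec, hS2S2, hw,
        mulVec_mulVec, hK'K, one_mulVec]
    have hab : a ⬝ᵥ b = 1 := by
      rw [hb, dotProduct_mulVec, haS2, hw, dotProduct_mulVec, huK, hee]
    have haa : a ⬝ᵥ a = κ := by
      nth_rewrite 2 [ha]
      rw [dotProduct_mulVec, haS2, hui]
    have hbb : b ⬝ᵥ b = K i i := by
      nth_rewrite 2 [hb]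
      rw [dotProduct_mulVec, hbS2, hw, he1]
      simp
    have h1 : 1 ≤ _root_.enorm a * _root_.enorm b := by
      have h := abs_dotProduct_le a b
      rw [hab] at h
      simpa using h
    have h2 := enorm_sq a
    have h3 := enorm_sq b
    rw [haa] at h2
    rw [hbb] at h3
    nlinarith [h1, enorm_nonneg a, enorm_nonneg b]
  have hκinv : κ⁻¹ ≤ opNorm K := by
    have h : κ⁻¹ * 1 ≤ κ⁻¹ * (κ * K i i) :=
      mul_le_mul_of_nonneg_left hκKii (inv_nonneg.mpr hκpos.le)
    rw [mul_one, inv_mul_cancel_left₀ hκpos.ne'] at h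
    exact h.trans hKii
  have hdot : |u ⬝ᵥ y| ≤ opNorm K⁻¹ * _root_.enorm y :=
    (abs_dotProduct_le u y).trans (mul_le_mul_of_nonneg_right ht (enorm_nonneg y))
  have hc : |κ⁻¹ * (u ⬝ᵥ y)| ≤ opNorm K * (opNorm K⁻¹ * _root_.enorm y) := by
    rw [abs_mul, abs_of_pos (inv_pos.mpr hκpos)]
    exact mul_le_mul hκinv hdot (abs_nonneg _) (opNorm_nonneg _)
  rw [show (hK.posSemidef.sqrt).mulVec (cS - cSi)
      = hK.posSemidef.sqrt *ᵥ ((κ⁻¹ * (u ⬝ᵥ y)) • u) from by rw [hdiff]]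
  calc _root_.enorm (hK.posSemidef.sqrt *ᵥ ((κ⁻¹ * (u ⬝ᵥ y)) • u))
      ≤ opNorm hK.posSemidef.sqrt * _root_.enorm ((κ⁻¹ * (u ⬝ᵥ y)) • u) := enorm_mulVec_le _ _
    _ = opNorm hK.posSemidef.sqrt * (|κ⁻¹ * (u ⬝ᵥ y)| * _root_.enorm u) := by rw [KernelAux.enorm_smul]
    _ ≤ opNorm hK.posSemidef.sqrt * ((opNorm K * (opNorm K⁻¹ * _root_.enorm y)) * opNorm K⁻¹) := by
        refine mul_le_mul_of_nonneg_left ?_ (opNorm_nonneg _)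
        exact mul_le_mul hc ht (enorm_nonneg _)
          (mul_nonneg (opNorm_nonneg _) (mul_nonneg (opNorm_nonneg _) (enorm_nonneg _)))
    _ = opNorm hK.posSemidef.sqrt * opNorm K⁻¹ * (opNorm K * opNorm K⁻¹) * _root_.enorm y := by
        ring
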